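/- Let p = 3, q = 6, r(1) = 3, r(2) = 6, and define C(N) = N/3 if 3 ∣ N, C(N) = 6N + r(N mod 3) otherwise. Then C³(N) ≤ (2/3)N + 6 for all N ≥ 1, and consequently for every N ≥ 1 there exists k ≥ 0 with C^k(N) ≤ 18. -/
import Mathlib


/-- For `p = 3`, `q = 6`, `r(1) = 3`, `r(2) = 6`: `C³(N) ≤ (2/3) N + 6` for all `N ≥ 1`,
and hence every orbit attains a value `≤ 18`. -/
theorem stmt8 (C : ℕ → ℕ)
    (hC : ∀ N, C N = if N % 3 = 0 then N / 3 else 6 * N + (if N % 3 = 1 then 3 else 6)) :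
    (∀ N, 1 ≤ N → (C^[3] N : ℚ) ≤ 2 / 3 * N + 6) ∧
    (∀ N, 1 ≤ N → ∃ k, C^[k] N ≤ 18) := by
  have key : ∀ N, 3 * C^[3] N ≤ 2 * N + 18 := by
    intro N
    simp only [Function.iterate_succ_apply, Function.iterate_zero_apply, hC]
    split_ifs <;> omega
  constructor
  · intro N _
    have h := key N
    have : (3 * C^[3] N : ℚ) ≤ 2 * N + 18 := by exact_mod_cast h
    linarith
  · intro N _
    have main : ∀ N, ∃ k, C^[k] N ≤ 18 := by
      intro N
      induction N using Nat.strong_induction_on with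
      | _ N ih =>
        by_cases h : N ≤ 18
        · exact ⟨0, h⟩
        · have hlt : C^[3] N < N := by have := key N; omega
          obtain ⟨k, hk⟩ := ih (C^[3] N) hlt
          exact ⟨k + 3, by rw [Function.iterate_add_apply]; exact hk⟩
    exact main N
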